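/- Let D be a causal differentiator and let L, N, R, τ ≥ 0. Then there exist f ∈ F_L^R, a noise η ∈ E_N, and a time t ≥ τ such that |ḟ(t) − [D(f + η)](t)| ≥ 2·√(N·L). In particular, the worst-case differentiation error of D from time τ over the class F_L^R with noise bound N is at least 2·√(N·L). -/

import Mathlib

open Set Filter Topology

/-- `f ∈ F_L`: `f : [0,∞) → ℝ` is differentiable with derivative `f'`
that is Lipschitz continuous with constant `L` on `[0,∞)`. -/
def IsFL (L : ℝ) (f f' : ℝ → ℝ) : Prop :=
  (∀ t ∈ Set.Ici (0:ℝ), HasDerivWithinAt f (f' t) (Set.Ici 0) t) ∧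
  ∀ s ∈ Set.Ici (0:ℝ), ∀ t ∈ Set.Ici (0:ℝ), |f' s - f' t| ≤ L * |s - t|

/-- `η ∈ E_N`: measurable noise bounded by `N` on `[0,∞)`. -/
def IsEN (N : ℝ) (η : ℝ → ℝ) : Prop :=
  Measurable η ∧ ∀ t ∈ Set.Ici (0:ℝ), |η t| ≤ N

/-- `f ∈ F_L^R`: member of `F_L` with `|f(0)| ≤ R` and `|ḟ(0)| ≤ R`. -/
def IsFLR (L R : ℝ) (f f' : ℝ → ℝ) : Prop :=
  IsFL L f f' ∧ |f 0| ≤ R ∧ |f' 0| ≤ R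

/-- A differentiator is causal if its output at time `T` depends only on the
input on `[0, T]`. -/
def Causal (D : (ℝ → ℝ) → ℝ → ℝ) : Prop :=
  ∀ u₁ u₂ T, (∀ t ∈ Set.Icc (0:ℝ) T, u₁ t = u₂ t) → D u₁ T = D u₂ T


lemma posPartSq_hasDerivAt (s : ℝ) :
    HasDerivAt (fun x : ℝ => (max x 0)^2) (2 * max s 0) s := by
  rcases lt_trichotomy s 0 with hs | hs | hs
  · have h : HasDerivAt (fun _ : ℝ => (0:ℝ)) 0 s := hasDerivAt_const s 0
    have heq : (fun x : ℝ => (max x 0)^2) =ᶠ[nhds s] fun _ => (0:ℝ) := by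
      filter_upwards [Iio_mem_nhds hs] with x hx
      simp [max_eq_right (le_of_lt (Set.mem_Iio.mp hx))]
    have := h.congr_of_eventuallyEq heq
    simpa [max_eq_right hs.le] using this
  · subst hs
    rw [hasDerivAt_iff_isLittleO]
    simp only [sub_zero, max_self, ne_eq, OfNat.ofNat_ne_zero, not_false_eq_true,
      zero_pow, mul_zero, sub_zero]
    have h2 : (fun x : ℝ => x * x) =o[nhds (0:ℝ)] fun x => x := by
      have ha : (fun x : ℝ => x) =o[nhds (0:ℝ)] fun _ => (1:ℝ) := by
        rw [Asymptotics.isLittleO_one_iff]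
        exact Filter.tendsto_id
      have hb := ha.mul_isBigO (Asymptotics.isBigO_refl (fun x : ℝ => x) (nhds 0))
      simpa using hb
    have h1 : (fun x : ℝ => (max x 0)^2) =O[nhds (0:ℝ)] fun x => x * x := by
      apply Asymptotics.IsBigO.of_bound 1
      filter_upwards with x
      rcases le_total x 0 with hx | hx
      · simp [max_eq_right hx]
        nlinarith [abs_nonneg (x*x)]
      · simp [max_eq_left hx, abs_mul]
        nlinarith [abs_nonneg x, sq_abs x, le_abs_self x]
    simpa using h1.trans_isLittleO h2
  · have h : HasDerivAt (fun x : ℝ => x^2) (2*s) s := by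
      simpa using hasDerivAt_pow 2 s
    have heq : (fun x : ℝ => (max x 0)^2) =ᶠ[nhds s] fun x => x^2 := by
      filter_upwards [Ioi_mem_nhds hs] with x hx
      simp [max_eq_left (le_of_lt (Set.mem_Ioi.mp hx))]
    have := h.congr_of_eventuallyEq heq
    simpa [max_eq_left hs.le] using this

lemma posPartSq_shift_hasDerivAt (c s : ℝ) :
    HasDerivAt (fun x : ℝ => (max (x - c) 0)^2) (2 * max (s - c) 0) s := by
  have h1 : HasDerivAt (fun x : ℝ => x - c) 1 s := (hasDerivAt_id s).sub_const c
  have := (posPartSq_hasDerivAt (s - c)).comp s h1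
  rw [mul_one] at this
  exact this

theorem stmt3 (D : (ℝ → ℝ) → ℝ → ℝ) (hD : Causal D)
    (L N R τ : ℝ) (hL : 0 ≤ L) (hN : 0 ≤ N) (hR : 0 ≤ R) (hτ : 0 ≤ τ) :
    ∃ (f f' η : ℝ → ℝ) (t : ℝ), IsFLR L R f f' ∧ IsEN N η ∧ τ ≤ t ∧
      2 * Real.sqrt (N * L) ≤ |f' t - D (f + η) t| := by
  by_cases h0 : N * L = 0
  · refine ⟨fun _ => 0, fun _ => 0, fun _ => 0, τ, ?_, ?_, le_refl τ, ?_⟩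
    · refine ⟨⟨fun t _ => (hasDerivWithinAt_const t _ 0), fun s _ t _ => ?_⟩, by simpa, by simpa⟩
      simpa using mul_nonneg hL (abs_nonneg (s - t))
    · exact ⟨measurable_const, fun t _ => by simpa⟩
    · rw [h0, Real.sqrt_zero, mul_zero]
      exact abs_nonneg _
  · have hL' : 0 < L := lt_of_le_of_ne hL (by rintro rfl; simp at h0)
    have hN' : 0 < N := lt_of_le_of_ne hN (by rintro rfl; simp at h0)
    set a : ℝ := Real.sqrt (N / L) with ha_def
    have ha : 0 < a := Real.sqrt_pos.mpr (div_pos hN' hL')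
    have ha2 : a^2 = N / L := Real.sq_sqrt (le_of_lt (div_pos hN' hL'))
    have hNa : L * a^2 = N := by rw [ha2]; field_simp
    have hsqrt : Real.sqrt (N * L) = L * a := by
      rw [show N * L = (L * a)^2 by nlinarith]
      exact Real.sqrt_sq (by positivity)
    set t : ℝ := τ + 4 * a with ht_def
    set f : ℝ → ℝ := fun s => L * (max (s - (τ + a)) 0)^2 - L/2 * (max (s - τ) 0)^2 with hf_def
    set f' : ℝ → ℝ :=
      fun s => L * (2 * max (s - (τ + a)) 0) - L/2 * (2 * max (s - τ) 0) with hf'_def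
    have hfs : ∀ s, f s = L * (max (s - (τ + a)) 0)^2 - L/2 * (max (s - τ) 0)^2 := fun _ => rfl
    have hf's : ∀ s, f' s = L * (2 * max (s - (τ + a)) 0) - L/2 * (2 * max (s - τ) 0) :=
      fun _ => rfl
    have hderiv : ∀ s, HasDerivAt f (f' s) s := fun s =>
      ((posPartSq_shift_hasDerivAt (τ + a) s).const_mul L).sub
        ((posPartSq_shift_hasDerivAt τ s).const_mul (L/2))
    have hf'alt : ∀ s, f' s = L * (|max (s - τ) 0 - a| - a) := by
      intro s
      have hr : max (s - (τ + a)) 0 = max (max (s - τ) 0 - a) 0 := by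
        rcases le_total (s - τ) 0 with h | h
        · rw [max_eq_right h, max_eq_right (by linarith), max_eq_right (by linarith [ha.le])]
        · rw [max_eq_left h]; congr 1; ring
      rw [hf's, hr]
      set q := max (s - τ) 0 with hq
      have hq0 : 0 ≤ q := le_max_right _ _
      rcases le_total q a with h | h
      · rw [max_eq_right (by linarith), abs_of_nonpos (by linarith)]
        ring
      · rw [max_eq_left (by linarith), abs_of_nonneg (by linarith)]
        ring
    have hlip : ∀ s u : ℝ, |f' s - f' u| ≤ L * |s - u| := by
      intro s u
      rw [hf'alt s, hf'alt u]
      have h2 : |max (s - τ) 0 - max (u - τ) 0| ≤ |s - u| := by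
        have := abs_max_sub_max_le_abs (s - τ) (u - τ) 0
        simpa using this
      have h1 : |max (s - τ) 0 - a| - |max (u - τ) 0 - a| ≤ |s - u| := by
        calc |max (s - τ) 0 - a| - |max (u - τ) 0 - a|
            ≤ |(max (s - τ) 0 - a) - (max (u - τ) 0 - a)| := abs_sub_abs_le_abs_sub _ _
          _ = |max (s - τ) 0 - max (u - τ) 0| := by rw [sub_sub_sub_cancel_right]
          _ ≤ |s - u| := h2
      have h1' : |max (u - τ) 0 - a| - |max (s - τ) 0 - a| ≤ |s - u| := by
        calc |max (u - τ) 0 - a| - |max (s - τ) 0 - a|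
            ≤ |(max (u - τ) 0 - a) - (max (s - τ) 0 - a)| := abs_sub_abs_le_abs_sub _ _
          _ = |max (s - τ) 0 - max (u - τ) 0| := by
              rw [sub_sub_sub_cancel_right, abs_sub_comm]
          _ ≤ |s - u| := h2
      have h3 : |(|max (s - τ) 0 - a| - a) - (|max (u - τ) 0 - a| - a)| ≤ |s - u| := by
        rw [abs_le]
        constructor <;> [linarith; linarith]
      calc |L * (|max (s - τ) 0 - a| - a) - L * (|max (u - τ) 0 - a| - a)|
          = L * |(|max (s - τ) 0 - a| - a) - (|max (u - τ) 0 - a| - a)| := by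
            rw [← mul_sub, abs_mul, abs_of_nonneg hL]
        _ ≤ L * |s - u| := mul_le_mul_of_nonneg_left h3 hL
    have hbound : ∀ s ∈ Set.Icc (0:ℝ) t, |f s| ≤ N := by
      intro s hs
      rw [hfs, abs_le]
      rcases le_total s (τ + a) with h | h
      · rw [max_eq_right (by linarith)]
        set q := max (s - τ) 0 with hq
        have hq0 : (0:ℝ) ≤ q := le_max_right _ _
        have hqa : q ≤ a := by
          rcases le_total (s - τ) 0 with h' | h'
          · rw [hq, max_eq_right h']; exact ha.le
          · rw [hq, max_eq_left h']; linarith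
        have hq2 : q^2 ≤ a^2 := by nlinarith
        constructor <;> nlinarith
      · have hst : s ≤ τ + 4 * a := hs.2
        rw [max_eq_left (by linarith), max_eq_left (by linarith)]
        have hA : 0 ≤ L * ((s - τ - 2*a)^2) := mul_nonneg hL (sq_nonneg _)
        have hB : 0 ≤ L * ((τ + 4*a - s) * (s - τ)) :=
          mul_nonneg hL (mul_nonneg (by linarith) (by linarith))
        constructor <;> nlinarith
    have hf't : f' t = 2 * (L * a) := by
      rw [hf's]
      rw [show t - (τ + a) = 3*a by rw [ht_def]; ring, show t - τ = 4*a by rw [ht_def]; ring,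
        max_eq_left (by linarith), max_eq_left (by linarith)]
      ring
    have hτt : τ ≤ t := by rw [ht_def]; linarith
    set η₁ : ℝ → ℝ := fun s => if s ≤ t then -f s else 0 with hη₁
    set η₂ : ℝ → ℝ := fun s => if s ≤ t then f s else 0 with hη₂
    have hfcont : Continuous f := by
      rw [hf_def]; fun_prop
    have hmeas : ∀ (g : ℝ → ℝ), Continuous g → Measurable (fun s => if s ≤ t then g s else 0) :=
      fun g hg => Measurable.ite measurableSet_Iic hg.measurable measurable_const
    have hηb : ∀ (g : ℝ → ℝ), (∀ s ∈ Set.Icc (0:ℝ) t, |g s| ≤ N) →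
        ∀ s ∈ Set.Ici (0:ℝ), |if s ≤ t then g s else 0| ≤ N := by
      intro g hg s hs
      by_cases h : s ≤ t
      · rw [if_pos h]; exact hg s ⟨hs, h⟩
      · rw [if_neg h]; simpa using hN
    have hDeq1 : D (f + η₁) t = D (fun _ => 0) t := by
      apply hD
      intro s hs
      simp only [Pi.add_apply, hη₁, if_pos hs.2]
      ring
    have hDeq2 : D ((fun s => -f s) + η₂) t = D (fun _ => 0) t := by
      apply hD
      intro s hs
      simp only [Pi.add_apply, hη₂, if_pos hs.2]
      ring
    have hf0 : f 0 = 0 := by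
      rw [hfs, max_eq_right (by linarith), max_eq_right (by linarith)]
      ring
    have hf'0 : f' 0 = 0 := by
      rw [hf's, max_eq_right (by linarith), max_eq_right (by linarith)]
      ring
    have hFLR : IsFLR L R f f' := by
      refine ⟨⟨fun u _ => (hderiv u).hasDerivWithinAt, fun s _ u _ => hlip s u⟩, ?_, ?_⟩
      · rw [hf0]; simpa using hR
      · rw [hf'0]; simpa using hR
    have hFLRneg : IsFLR L R (fun s => -f s) (fun s => -f' s) := by
      refine ⟨⟨fun u hu => (hderiv u).neg.hasDerivWithinAt, fun s _ u _ => ?_⟩, ?_, ?_⟩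
      · rw [show -f' s - -f' u = -(f' s - f' u) by ring, abs_neg]
        exact hlip s u
      · simpa [hf0] using hR
      · simpa [hf'0] using hR
    have hkey : 2 * (2 * (L * a)) ≤
        |f' t - D (f + η₁) t| + |(-f' t) - D ((fun s => -f s) + η₂) t| := by
      rw [hDeq1, hDeq2]
      calc 2 * (2 * (L * a)) = |(f' t - D (fun _ => 0) t) - (-f' t - D (fun _ => 0) t)| := by
            rw [show (f' t - D (fun _ => 0) t) - (-f' t - D (fun _ => 0) t) = 2 * f' t by ring,
              hf't, abs_of_nonneg (by positivity)]
        _ ≤ |f' t - D (fun _ => 0) t| + |(-f' t - D (fun _ => 0) t)| := abs_sub _ _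
    rcases le_or_gt (2 * (L * a)) (|f' t - D (f + η₁) t|) with hc | hc
    · refine ⟨f, f', η₁, t, hFLR, ⟨hmeas _ hfcont.neg, ?_⟩, hτt, ?_⟩
      · exact hηb _ (fun s hs => by rw [abs_neg]; exact hbound s hs)
      · rw [hsqrt]; exact hc
    · refine ⟨fun s => -f s, fun s => -f' s, η₂, t, hFLRneg, ⟨hmeas _ hfcont, hηb _ hbound⟩,
        hτt, ?_⟩
      rw [hsqrt]
      have h4 : 2 * (L * a) ≤ |(-f' t) - D ((fun s => -f s) + η₂) t| := by linarith
      exact h4
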